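/- Let N ≥ 1 be an integer and 0 < α < 1, 0 < β < 1. Define D₁ = 1 + αβ/(1−α) and η = β/((1−α)D₁). For each integer 0 ≤ k ≤ N, the function ψ_k(i) := b(i;N;η)·₂F₁(−i,−k;−N;η⁻¹) is an eigenfunction of the kernel K with eigenvalue λ_k = α^k(1−β)^k, i.e. Σ_{j=0}^N K(i,j)·ψ_k(j) = α^k(1−β)^k·ψ_k(i) for all 0 ≤ i ≤ N. -/

import Mathlib

/-- The Pochhammer symbol `(a)ᵣ = a(a+1)⋯(a+r-1)`. -/
noncomputable def poch (a : ℝ) (r : ℕ) : ℝ := Polynomial.eval a (ascPochhammer ℝ r)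

/-- The binomial distribution `b(k;n;p) = C(n,k) p^k (1-p)^(n-k)`
(automatically `0` when `k > n` since `C(n,k) = 0`). -/
noncomputable def binom (n k : ℕ) (p : ℝ) : ℝ :=
  (n.choose k : ℝ) * p ^ k * (1 - p) ^ (n - k)

/-- One-variable cumulative Bernoulli trial transition kernel on `{0,…,N}`:
`K(j,i) = ∑_{k=0}^{min(i,j)} b(k;i;α) b(j-k;N-k;β)`, the probability of moving
from state `i` to state `j`. -/
noncomputable def K1 (N : ℕ) (α β : ℝ) (j i : ℕ) : ℝ :=
  ∑ k ∈ Finset.range (min i j + 1), binom i k α * binom (N - k) (j - k) β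

/-- The terminating hypergeometric sum (Krawtchouk polynomial)
`₂F₁(-i,-k;-N;z) = ∑_{r=0}^{min(i,k)} (-i)ᵣ(-k)ᵣ/((-N)ᵣ r!) zʳ`. -/
noncomputable def hyp2F1 (i k N : ℕ) (z : ℝ) : ℝ :=
  ∑ r ∈ Finset.range (min i k + 1),
    poch (-(i : ℝ)) r * poch (-(k : ℝ)) r / (poch (-(N : ℝ)) r * (r.factorial : ℝ)) * z ^ r

/-- Extended-range normalized Krawtchouk polynomial. -/
noncomputable def kraw (M j k : ℕ) (z : ℝ) : ℝ :=
  ∑ r ∈ Finset.range (k + 1),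
    (-1 : ℝ) ^ r * (j.choose r : ℝ) * (k.choose r : ℝ) / (M.choose r : ℝ) * z ^ r

lemma poch_neg (n r : ℕ) : poch (-(n : ℝ)) r = (-1) ^ r * (n.descFactorial r : ℝ) := by
  induction r with
  | zero => simp [poch]
  | succ r ih =>
    have h : poch (-(n : ℝ)) (r + 1) = poch (-(n : ℝ)) r * (-(n : ℝ) + r) := by
      simp [poch, ascPochhammer_succ_right]
    rw [h, ih, Nat.descFactorial_succ]
    rcases le_or_gt r n with hle | hlt
    · have : ((n - r : ℕ) : ℝ) = (n : ℝ) - r := by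
        push_cast [Nat.cast_sub hle]; ring
      push_cast [this]; ring
    · have h1 : n.descFactorial r = 0 := Nat.descFactorial_eq_zero_iff_lt.2 hlt
      have h2 : n - r = 0 := by omega
      simp [h1, h2]

lemma hyp_eq_kraw (N j k : ℕ) (hj : j ≤ N) (z : ℝ) :
    hyp2F1 j k N z = kraw N j k z := by
  unfold hyp2F1 kraw
  rw [← Finset.sum_subset (Finset.range_subset_range.2 (by omega : min j k + 1 ≤ k + 1))
      (by
        intro r hr hr'
        simp only [Finset.mem_range] at hr hr'
        have : j < r := by omega
        simp [Nat.choose_eq_zero_of_lt this])]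
  refine Finset.sum_congr rfl fun r hr => ?_
  simp only [Finset.mem_range] at hr
  have hrN : r ≤ N := by omega
  rw [poch_neg, poch_neg, poch_neg,
    Nat.descFactorial_eq_factorial_mul_choose, Nat.descFactorial_eq_factorial_mul_choose,
    Nat.descFactorial_eq_factorial_mul_choose]
  have hf : (r.factorial : ℝ) ≠ 0 := by exact_mod_cast r.factorial_ne_zero
  have hc : (N.choose r : ℝ) ≠ 0 := by
    exact_mod_cast (Nat.choose_pos hrN).ne'
  have hneg : ((-1 : ℝ)) ^ r ≠ 0 := by positivity
  push_cast
  field_simp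

lemma pgf (N : ℕ) (α β : ℝ) (i : ℕ) (hi : i ≤ N) (A B : ℝ) :
    ∑ j ∈ Finset.range (N + 1), K1 N α β j i * (A ^ (N - j) * B ^ j)
      = ((1 - β) * A + β * B) ^ (N - i)
        * ((1 - α) * ((1 - β) * A + β * B) + α * B) ^ i := by
  unfold K1 binom
  have swap :
      ∑ j ∈ Finset.range (N + 1), (∑ m ∈ Finset.range (min i j + 1),
          ((i.choose m : ℝ) * α ^ m * (1 - α) ^ (i - m)) *
            (((N - m).choose (j - m) : ℝ) * β ^ (j - m) * (1 - β) ^ ((N - m) - (j - m))))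
          * (A ^ (N - j) * B ^ j)
      = ∑ m ∈ Finset.range (i + 1), ∑ j ∈ Finset.Ico m (N + 1),
          (((i.choose m : ℝ) * α ^ m * (1 - α) ^ (i - m)) *
            (((N - m).choose (j - m) : ℝ) * β ^ (j - m) * (1 - β) ^ ((N - m) - (j - m))))
          * (A ^ (N - j) * B ^ j) := by
    rw [← Finset.sum_comm' (s := Finset.range (N + 1))
      (t := fun j => Finset.range (min i j + 1)) (t' := Finset.range (i + 1))
      (s' := fun m => Finset.Ico m (N + 1)) ?_]
    · exact Finset.sum_congr rfl fun j _ => Finset.sum_mul _ _ _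
    · intro j m
      simp only [Finset.mem_range, Finset.mem_Ico]
      omega
  rw [swap]
  have inner : ∀ m ∈ Finset.range (i + 1),
      ∑ j ∈ Finset.Ico m (N + 1),
          (((i.choose m : ℝ) * α ^ m * (1 - α) ^ (i - m)) *
            (((N - m).choose (j - m) : ℝ) * β ^ (j - m) * (1 - β) ^ ((N - m) - (j - m))))
          * (A ^ (N - j) * B ^ j)
      = ((i.choose m : ℝ) * α ^ m * (1 - α) ^ (i - m)) * B ^ m
          * ((1 - β) * A + β * B) ^ (N - m) := by
    intro m hm
    simp only [Finset.mem_range] at hm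
    have hmN : m ≤ N := by omega
    rw [Finset.sum_Ico_eq_sum_range]
    have : ∀ t ∈ Finset.range (N + 1 - m),
        (((i.choose m : ℝ) * α ^ m * (1 - α) ^ (i - m)) *
            (((N - m).choose (m + t - m) : ℝ) * β ^ (m + t - m) * (1 - β) ^ ((N - m) - (m + t - m))))
          * (A ^ (N - (m + t)) * B ^ (m + t))
        = ((i.choose m : ℝ) * α ^ m * (1 - α) ^ (i - m)) * B ^ m *
            ((β * B) ^ t * ((1 - β) * A) ^ ((N - m) - t) * ((N - m).choose t : ℝ)) := by
      intro t ht
      simp only [Finset.mem_range] at ht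
      have h1 : m + t - m = t := by omega
      have h2 : N - (m + t) = (N - m) - t := by omega
      rw [h1, h2]
      rw [pow_add, mul_pow, mul_pow]
      ring
    rw [Finset.sum_congr rfl this, ← Finset.mul_sum,
      show N + 1 - m = (N - m) + 1 by omega, ← add_pow, add_comm (β * B) ((1 - β) * A)]
  rw [Finset.sum_congr rfl inner]
  have : ∀ m ∈ Finset.range (i + 1),
      ((i.choose m : ℝ) * α ^ m * (1 - α) ^ (i - m)) * B ^ m
          * ((1 - β) * A + β * B) ^ (N - m)
      = ((1 - β) * A + β * B) ^ (N - i) *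
          ((α * B) ^ m * ((1 - α) * ((1 - β) * A + β * B)) ^ (i - m) * (i.choose m : ℝ)) := by
    intro m hm
    simp only [Finset.mem_range] at hm
    have h3 : N - m = (N - i) + (i - m) := by omega
    rw [h3, pow_add, mul_pow, mul_pow]
    ring
  rw [Finset.sum_congr rfl this, ← Finset.mul_sum, ← add_pow]
  ring

lemma krawGF (N j : ℕ) (hj : j ≤ N) (z w : ℝ) :
    ∑ k ∈ Finset.range (N + 1), (N.choose k : ℝ) * w ^ k * kraw N j k z
      = (1 + w) ^ (N - j) * (1 + w * (1 - z)) ^ j := by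
  unfold kraw
  have swap :
      ∑ k ∈ Finset.range (N + 1), (N.choose k : ℝ) * w ^ k *
          (∑ r ∈ Finset.range (k + 1),
            (-1 : ℝ) ^ r * (j.choose r : ℝ) * (k.choose r : ℝ) / (N.choose r : ℝ) * z ^ r)
      = ∑ r ∈ Finset.range (N + 1), ∑ k ∈ Finset.Ico r (N + 1),
          (N.choose k : ℝ) * w ^ k *
            ((-1 : ℝ) ^ r * (j.choose r : ℝ) * (k.choose r : ℝ) / (N.choose r : ℝ) * z ^ r) := by
    rw [← Finset.sum_comm' (s := Finset.range (N + 1))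
      (t := fun k => Finset.range (k + 1)) (t' := Finset.range (N + 1))
      (s' := fun r => Finset.Ico r (N + 1)) ?_]
    · exact Finset.sum_congr rfl fun k _ => Finset.mul_sum _ _ _
    · intro k r
      simp only [Finset.mem_range, Finset.mem_Ico]
      omega
  rw [swap]
  have inner : ∀ r ∈ Finset.range (N + 1),
      ∑ k ∈ Finset.Ico r (N + 1),
          (N.choose k : ℝ) * w ^ k *
            ((-1 : ℝ) ^ r * (j.choose r : ℝ) * (k.choose r : ℝ) / (N.choose r : ℝ) * z ^ r)
      = (j.choose r : ℝ) * (-(z * w)) ^ r * (1 + w) ^ (N - r) := by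
    intro r hr
    simp only [Finset.mem_range] at hr
    have hrN : r ≤ N := by omega
    have hNr : (N.choose r : ℝ) ≠ 0 := by exact_mod_cast (Nat.choose_pos hrN).ne'
    rw [Finset.sum_Ico_eq_sum_range]
    have term : ∀ t ∈ Finset.range (N + 1 - r),
        (N.choose (r + t) : ℝ) * w ^ (r + t) *
            ((-1 : ℝ) ^ r * (j.choose r : ℝ) * ((r + t).choose r : ℝ) / (N.choose r : ℝ) * z ^ r)
        = (j.choose r : ℝ) * (-(z * w)) ^ r *
            (w ^ t * (1 : ℝ) ^ ((N - r) - t) * ((N - r).choose t : ℝ)) := by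
      intro t ht
      simp only [Finset.mem_range] at ht
      have hcm : (N.choose (r + t) : ℝ) * ((r + t).choose r : ℝ)
          = (N.choose r : ℝ) * ((N - r).choose t : ℝ) := by
        have := Nat.choose_mul (n := N) (k := r + t) (s := r) (by omega)
        have h2 : r + t - r = t := by omega
        rw [h2] at this
        exact_mod_cast congrArg (Nat.cast : ℕ → ℝ) this
      have hneg : (-(z * w)) ^ r = (-1 : ℝ) ^ r * (z ^ r * w ^ r) := by
        rw [neg_eq_neg_one_mul, mul_pow, mul_pow]
      field_simp
      rw [pow_add, hneg]
      linear_combination ((-1 : ℝ)) ^ r * z ^ r * w ^ r * w ^ t * (j.choose r : ℝ) * hcm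
    rw [Finset.sum_congr rfl term, ← Finset.mul_sum,
      show N + 1 - r = (N - r) + 1 by omega, ← add_pow]
    ring
  rw [Finset.sum_congr rfl inner]
  rw [← Finset.sum_subset (Finset.range_subset_range.2 (by omega : j + 1 ≤ N + 1))
      (by
        intro r hr hr'
        simp only [Finset.mem_range] at hr hr'
        simp [Nat.choose_eq_zero_of_lt (by omega : j < r)])]
  have last : ∀ r ∈ Finset.range (j + 1),
      (j.choose r : ℝ) * (-(z * w)) ^ r * (1 + w) ^ (N - r)
      = (1 + w) ^ (N - j) * ((-(z * w)) ^ r * (1 + w) ^ (j - r) * (j.choose r : ℝ)) := by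
    intro r hr
    simp only [Finset.mem_range] at hr
    rw [show N - r = (N - j) + (j - r) by omega, pow_add]
    ring
  rw [Finset.sum_congr rfl last, ← Finset.mul_sum, ← add_pow]
  ring

lemma eigen (N : ℕ) (α β z : ℝ) (hz : β * z = 1 - α * (1 - β))
    (i k : ℕ) (hi : i ≤ N) (hk : k ≤ N) :
    ∑ j ∈ Finset.range (N + 1), K1 N α β j i * kraw N j k z
      = (α * (1 - β)) ^ k * kraw N i k z := by
  set F : ℕ → ℝ := fun m => ∑ j ∈ Finset.range (N + 1), K1 N α β j i * kraw N j m z with hF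
  set G : ℕ → ℝ := fun m => (α * (1 - β)) ^ m * kraw N i m z with hG
  have GF : ∀ w : ℝ,
      ∑ m ∈ Finset.range (N + 1), ((N.choose m : ℝ) * F m) * w ^ m
      = ∑ m ∈ Finset.range (N + 1), ((N.choose m : ℝ) * G m) * w ^ m := by
    intro w
    have l1 : ∑ m ∈ Finset.range (N + 1), ((N.choose m : ℝ) * F m) * w ^ m
        = ∑ j ∈ Finset.range (N + 1), K1 N α β j i *
            (∑ m ∈ Finset.range (N + 1), (N.choose m : ℝ) * w ^ m * kraw N j m z) := by
      simp only [hF, Finset.sum_mul, Finset.mul_sum]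
      rw [Finset.sum_comm]
      refine Finset.sum_congr rfl fun j _ => Finset.sum_congr rfl fun m _ => by ring
    rw [l1]
    have l2 : ∀ j ∈ Finset.range (N + 1),
        K1 N α β j i * (∑ m ∈ Finset.range (N + 1), (N.choose m : ℝ) * w ^ m * kraw N j m z)
        = K1 N α β j i * ((1 + w) ^ (N - j) * (1 + w * (1 - z)) ^ j) := by
      intro j hj
      simp only [Finset.mem_range] at hj
      rw [krawGF N j (by omega) z w]
    rw [Finset.sum_congr rfl l2, pgf N α β i hi (1 + w) (1 + w * (1 - z))]
    have e1 : (1 - β) * (1 + w) + β * (1 + w * (1 - z)) = 1 + α * (1 - β) * w := by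
      linear_combination (-w) * hz
    rw [e1]
    have e2 : (1 - α) * (1 + α * (1 - β) * w) + α * (1 + w * (1 - z))
        = 1 + (α * (1 - β) * w) * (1 - z) := by
      linear_combination (-(α * w)) * hz
    rw [e2, ← krawGF N i hi z (α * (1 - β) * w)]
    refine Finset.sum_congr rfl fun m _ => ?_
    simp only [hG]
    rw [mul_pow]
    ring
  have hpoly : (∑ m ∈ Finset.range (N + 1),
        Polynomial.C ((N.choose m : ℝ) * F m) * Polynomial.X ^ m)
      = ∑ m ∈ Finset.range (N + 1),
        Polynomial.C ((N.choose m : ℝ) * G m) * Polynomial.X ^ m := by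
    apply Polynomial.funext
    intro w
    simpa [Polynomial.eval_finset_sum] using GF w
  have hco := congrArg (fun p => Polynomial.coeff p k) hpoly
  simp only [Polynomial.finset_sum_coeff, Polynomial.coeff_C_mul, Polynomial.coeff_X_pow,
    mul_ite, mul_one, mul_zero, Finset.sum_ite_eq (Finset.range (N + 1)),
    Finset.mem_range, if_pos (by omega : k < N + 1)] at hco
  have hNk : (N.choose k : ℝ) ≠ 0 := by exact_mod_cast (Nat.choose_pos hk).ne'
  exact mul_left_cancel₀ hNk hco

lemma rev_aux {η α β : ℝ} (hkey : η * (1 - α) * (1 - β) = (1 - η) * β)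
    (hβ : β ≠ 0) (hβ' : (1 : ℝ) - β ≠ 0)
    (a a' b b' : ℕ) (h : a + a' = b + b') :
    η ^ b * (1 - η) ^ b' * (1 - α) ^ b * β ^ a * (1 - β) ^ a'
      = η ^ a * (1 - η) ^ a' * (1 - α) ^ a * β ^ b * (1 - β) ^ b' := by
  apply mul_right_cancel₀ (b := (1 - β) ^ (a + b) * β ^ (a' + b'))
    (mul_ne_zero (pow_ne_zero _ hβ') (pow_ne_zero _ hβ))
  have L : η ^ b * (1 - η) ^ b' * (1 - α) ^ b * β ^ a * (1 - β) ^ a'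
        * ((1 - β) ^ (a + b) * β ^ (a' + b'))
      = (η * (1 - α) * (1 - β)) ^ b * ((1 - η) * β) ^ b' * (β * (1 - β)) ^ (a + a') := by
    rw [mul_pow, mul_pow, mul_pow, mul_pow, pow_add, pow_add, pow_add]
    ring
  have R : η ^ a * (1 - η) ^ a' * (1 - α) ^ a * β ^ b * (1 - β) ^ b'
        * ((1 - β) ^ (a + b) * β ^ (a' + b'))
      = (η * (1 - α) * (1 - β)) ^ a * ((1 - η) * β) ^ a' * (β * (1 - β)) ^ (b + b') := by
    rw [mul_pow, mul_pow, mul_pow, mul_pow, pow_add, pow_add, pow_add]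
    ring
  rw [L, R, hkey, ← pow_add, ← pow_add, h]

lemma rev (N : ℕ) (α β η : ℝ) (hkey : η * (1 - α) * (1 - β) = (1 - η) * β)
    (hβ : β ≠ 0) (hβ' : (1 : ℝ) - β ≠ 0)
    (i j : ℕ) (hi : i ≤ N) (hj : j ≤ N) :
    binom N j η * K1 N α β i j = binom N i η * K1 N α β j i := by
  unfold K1
  rw [min_comm j i, Finset.mul_sum, Finset.mul_sum]
  refine Finset.sum_congr rfl fun m hm => ?_
  simp only [Finset.mem_range] at hm
  have hmi : m ≤ i := by omega
  have hmj : m ≤ j := by omega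
  unfold binom
  have c1 : (N.choose j : ℝ) * (j.choose m : ℝ)
      = (N.choose m : ℝ) * ((N - m).choose (j - m) : ℝ) := by
    exact_mod_cast congrArg (Nat.cast : ℕ → ℝ) (Nat.choose_mul (n := N) hmj)
  have c2 : (N.choose i : ℝ) * (i.choose m : ℝ)
      = (N.choose m : ℝ) * ((N - m).choose (i - m) : ℝ) := by
    exact_mod_cast congrArg (Nat.cast : ℕ → ℝ) (Nat.choose_mul (n := N) hmi)
  have p1 : η ^ j = η ^ m * η ^ (j - m) := by
    rw [← pow_add]; congr 1; omega
  have p2 : η ^ i = η ^ m * η ^ (i - m) := by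
    rw [← pow_add]; congr 1; omega
  have q1 : (N - m) - (i - m) = N - i := by omega
  have q2 : (N - m) - (j - m) = N - j := by omega
  rw [q1, q2, p1, p2]
  have key := rev_aux hkey hβ hβ' (i - m) (N - i) (j - m) (N - j) (by omega)
  linear_combination
    ((N.choose m : ℝ) * ((N - m).choose (j - m) : ℝ) * ((N - m).choose (i - m) : ℝ)
      * α ^ m * η ^ m) * key
    + (((N - m).choose (i - m) : ℝ) * α ^ m * η ^ m * (η ^ (j - m) * (1 - η) ^ (N - j)
        * (1 - α) ^ (j - m) * β ^ (i - m) * (1 - β) ^ (N - i))) * c1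
    - (((N - m).choose (j - m) : ℝ) * α ^ m * η ^ m * (η ^ (i - m) * (1 - η) ^ (N - i)
        * (1 - α) ^ (i - m) * β ^ (j - m) * (1 - β) ^ (N - j))) * c2

/-- `ψ_k(i) = b(i;N;η) ₂F₁(-i,-k;-N;η⁻¹)` is an eigenfunction of the
one-variable cumulative Bernoulli trial kernel with eigenvalue `α^k (1-β)^k`. -/
theorem stmt_2 (N : ℕ) (hN : 1 ≤ N) (α β : ℝ)
    (hα0 : 0 < α) (hα1 : α < 1) (hβ0 : 0 < β) (hβ1 : β < 1)
    (D₁ : ℝ) (hD : D₁ = 1 + α * β / (1 - α))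
    (η : ℝ) (hη : η = β / ((1 - α) * D₁)) :
    ∀ k : ℕ, k ≤ N → ∀ i : ℕ, i ≤ N →
      ∑ j ∈ Finset.range (N + 1),
          K1 N α β i j * (binom N j η * hyp2F1 j k N η⁻¹)
        = α ^ k * (1 - β) ^ k * (binom N i η * hyp2F1 i k N η⁻¹) := by
  intro k hk i hi
  have hα' : (1 : ℝ) - α ≠ 0 := by linarith
  have hβ' : (1 : ℝ) - β ≠ 0 := by linarith
  have hd : 0 < 1 - α * (1 - β) := by nlinarith
  have hden : (1 - α) * D₁ = 1 - α * (1 - β) := by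
    rw [hD]; field_simp; ring
  have hηv : η = β / (1 - α * (1 - β)) := by rw [hη, hden]
  have hz : β * η⁻¹ = 1 - α * (1 - β) := by
    rw [hηv, inv_div]
    field_simp
  have hkey : η * (1 - α) * (1 - β) = (1 - η) * β := by
    rw [hηv]
    field_simp
    ring
  calc
    ∑ j ∈ Finset.range (N + 1), K1 N α β i j * (binom N j η * hyp2F1 j k N η⁻¹)
        = ∑ j ∈ Finset.range (N + 1), binom N i η * (K1 N α β j i * kraw N j k η⁻¹) := by
          refine Finset.sum_congr rfl fun j hj => ?_
          simp only [Finset.mem_range] at hj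
          rw [hyp_eq_kraw N j k (by omega) η⁻¹]
          have hr := rev N α β η hkey hβ0.ne' hβ' i j hi (by omega)
          linear_combination (kraw N j k η⁻¹) * hr
    _ = binom N i η * ∑ j ∈ Finset.range (N + 1), K1 N α β j i * kraw N j k η⁻¹ :=
          (Finset.mul_sum _ _ _).symm
    _ = binom N i η * ((α * (1 - β)) ^ k * kraw N i k η⁻¹) := by
          rw [eigen N α β η⁻¹ hz i k hi hk]
    _ = α ^ k * (1 - β) ^ k * (binom N i η * hyp2F1 i k N η⁻¹) := by
          rw [hyp_eq_kraw N i k hi, mul_pow]; ring
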